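/- Let Ω be a countable linearly ordered set whose group of order-automorphisms Aut(Ω) is countable, let f and g be order-automorphisms of Ω, and let x ∈ Ω. If the orbitals U_f(x) and U_g(x) are both infinite, then U_f(x) = U_g(x). -/

import Mathlib

open Classical OrderDual

/-- The orbital of `x` under the order-automorphism `f`: all points lying
between two iterates `f^m x` and `f^n x`. -/
def orbital {Ω : Type} [LinearOrder Ω] (f : Ω ≃o Ω) (x : Ω) : Set Ω :=
  {y | ∃ m n : ℤ, (f ^ m) x ≤ y ∧ y ≤ (f ^ n) x}

section Machinery
variable {Ω : Type} [LinearOrder Ω]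





lemma mem_orbital_self (f : Ω ≃o Ω) (x : Ω) : x ∈ orbital f x :=
  ⟨0, 0, by simp, by simp⟩

lemma zpow_apply_mul (f : Ω ≃o Ω) (m n : ℤ) (y : Ω) : (f ^ (m+n)) y = (f^m) ((f^n) y) := by
  rw [zpow_add]; rfl

lemma orbital_convex {f : Ω ≃o Ω} {x a b y : Ω} (ha : a ∈ orbital f x)
    (hb : b ∈ orbital f x) (h1 : a ≤ y) (h2 : y ≤ b) : y ∈ orbital f x := by
  obtain ⟨m, _, hm, _⟩ := ha
  obtain ⟨_, n, _, hn⟩ := hb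
  exact ⟨m, n, hm.trans h1, h2.trans hn⟩

lemma orbit_monotone {f : Ω ≃o Ω} {x : Ω} (hx : x ≤ f x) {m n : ℤ} (h : m ≤ n) :
    (f^m) x ≤ (f^n) x := by
  have step : ∀ k : ℤ, (f^k) x ≤ (f^(k+1)) x := by
    intro k
    rw [zpow_add_one, show (f ^ k * f) x = (f^k) (f x) from rfl]
    exact (f^k).monotone hx
  have key : ∀ k : ℕ, (f^m) x ≤ (f^(m + (k:ℤ))) x := by
    intro k
    induction k with
    | zero => simp
    | succ k ih =>
        have : (m + ((k:ℤ)+1)) = (m + (k:ℤ)) + 1 := by ring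
        rw [Nat.cast_add, Nat.cast_one, this]
        exact ih.trans (step _)
  have hnk : n = m + ((n - m).toNat : ℤ) := by
    rw [Int.toNat_of_nonneg (by omega)]; ring
  rw [hnk]; exact key _

lemma mem_orbital_apply {f : Ω ≃o Ω} {x y : Ω} (hy : y ∈ orbital f x) :
    f y ∈ orbital f x := by
  obtain ⟨m, n, hm, hn⟩ := hy
  have e1 : (f ^ (m+1)) x = f ((f^m) x) := by rw [add_comm, zpow_apply_mul]; simp
  have e2 : (f ^ (n+1)) x = f ((f^n) x) := by rw [add_comm, zpow_apply_mul]; simp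
  exact ⟨m+1, n+1, e1.le.trans (f.monotone hm), (f.monotone hn).trans e2.ge⟩

lemma orbital_inv (f : Ω ≃o Ω) (x : Ω) : orbital f⁻¹ x = orbital f x := by
  have key : ∀ m : ℤ, (f⁻¹ ^ m) = f ^ (-m) := by
    intro m; rw [zpow_neg, ← inv_zpow]
  ext y
  constructor
  · rintro ⟨m, n, hm, hn⟩
    exact ⟨-m, -n, by rwa [key] at hm, by rwa [key] at hn⟩
  · rintro ⟨m, n, hm, hn⟩
    exact ⟨-m, -n, by rw [key, neg_neg]; exact hm, by rw [key, neg_neg]; exact hn⟩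

lemma zpow_fixed {f : Ω ≃o Ω} {x : Ω} (h : f x = x) (m : ℤ) : (f^m) x = x := by
  have hsymm : f.symm x = x := f.injective (by rw [f.apply_symm_apply, h])
  induction m using Int.induction_on with
  | zero => simp
  | succ k ih => rw [zpow_add_one, show (f ^ (k:ℤ) * f) x = (f^(k:ℤ)) (f x) from rfl, h, ih]
  | pred k ih =>
      rw [sub_eq_add_neg, add_comm, zpow_apply_mul, ih]
      calc (f ^ (-1:ℤ)) x = f⁻¹ x := by rw [zpow_neg_one]
      _ = f.symm x := rfl
      _ = x := hsymm

lemma orbital_fixed {f : Ω ≃o Ω} {x : Ω} (h : f x = x) : orbital f x = {x} := by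
  ext y
  simp only [Set.mem_singleton_iff]
  constructor
  · rintro ⟨m, n, hm, hn⟩
    rw [zpow_fixed h m] at hm; rw [zpow_fixed h n] at hn
    exact le_antisymm hn hm
  · rintro rfl; exact mem_orbital_self f _

lemma moves_of_infinite {f : Ω ≃o Ω} {x : Ω} (h : (orbital f x).Infinite) : f x ≠ x := by
  intro hx
  rw [orbital_fixed hx] at h
  exact h (Set.finite_singleton x)







lemma inv_zpow_eq (f : Ω ≃o Ω) (m : ℤ) : (f⁻¹ ^ m) = f ^ (-m) := by
  rw [zpow_neg, ← inv_zpow]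

lemma zpow_zero_apply (f : Ω ≃o Ω) (y : Ω) : (f ^ (0:ℤ)) y = y := rfl

lemma zpow_one_apply (f : Ω ≃o Ω) (y : Ω) : (f ^ (1:ℤ)) y = f y := by
  rw [show (1:ℤ) = 0 + 1 from rfl, zpow_add_one]
  show (f ^ (0:ℤ)) (f y) = f y
  rfl

lemma zpow_succ_apply (f : Ω ≃o Ω) (k : ℤ) (y : Ω) : (f ^ (k+1)) y = f ((f^k) y) := by
  rw [add_comm, zpow_apply_mul, zpow_one_apply]

lemma inv_apply_le {f : Ω ≃o Ω} {y : Ω} (h : y ≤ f y) : f⁻¹ y ≤ y := by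
  have := f.symm.monotone h
  rw [f.symm_apply_apply] at this
  exact this

lemma le_inv_apply {f : Ω ≃o Ω} {y : Ω} (h : f y ≤ y) : y ≤ f⁻¹ y := by
  have := f.symm.monotone h
  rw [f.symm_apply_apply] at this
  exact this

lemma neg_zpow_apply (f : Ω ≃o Ω) (m : ℤ) (y : Ω) : (f^(-m)) ((f^m) y) = y := by
  rw [← zpow_apply_mul, neg_add_cancel, zpow_zero_apply]

lemma orbit_antitone {f : Ω ≃o Ω} {x : Ω} (hx : f x ≤ x) {m n : ℤ} (h : m ≤ n) :
    (f^n) x ≤ (f^m) x := by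
  have := orbit_monotone (f := f⁻¹) (le_inv_apply hx) (show -n ≤ -m by omega)
  rwa [inv_zpow_eq, inv_zpow_eq, neg_neg, neg_neg] at this

lemma orbital_same_direction {g : Ω ≃o Ω} {x y : Ω} (hx : x < g x)
    (hy : y ∈ orbital g x) : y < g y := by
  obtain ⟨m, n, hm, hn⟩ := hy
  rcases lt_trichotomy y (g y) with h | h | h
  · exact h
  · exfalso
    have h1 : (g^(n+1)) x ≤ y := by
      have h0 := (g^(n+1-m)).monotone hm
      rw [← zpow_apply_mul, zpow_fixed h.symm] at h0
      rw [show n+1-m+m = n+1 by ring] at h0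
      exact h0
    have h2 : (g^n) x < (g^(n+1)) x := by
      rw [show n+1 = n+1 from rfl, zpow_apply_mul g n 1, zpow_one_apply]
      exact (g^n).strictMono hx
    exact absurd (h1.trans hn) (not_le.2 h2)
  · exfalso
    have hyx : y ≤ x := by
      rcases le_or_gt 0 n with hn0 | hn0
      · have h1 : (g^(-n)) y ≤ x := by
          have := (g^(-n)).monotone hn
          rwa [neg_zpow_apply] at this
        have h2 : y ≤ (g^(-n)) y := by
          have h3 := orbit_monotone (f := g⁻¹) (x := y) (le_inv_apply h.le) (show 0 ≤ n from hn0)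
          rw [inv_zpow_eq, inv_zpow_eq, neg_zero] at h3
          simpa using h3
        exact h2.trans h1
      · have : (g^n) x ≤ (g^(0:ℤ)) x := orbit_monotone hx.le hn0.le
        rw [zpow_zero_apply] at this
        exact hn.trans this
    rcases le_or_gt 0 m with hm0 | hm0
    · have hxm : x ≤ (g^m) x := by
        have := orbit_monotone hx.le hm0
        rwa [zpow_zero_apply] at this
      have hyx2 : y = x := le_antisymm hyx (hxm.trans hm)
      rw [hyx2] at h
      exact absurd h (not_lt.2 hx.le)
    · have h1 : x ≤ (g^(-m)) y := by
        have := (g^(-m)).monotone hm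
        rwa [neg_zpow_apply] at this
      have h2 : (g^(-m)) y < y := by
        have h3 := orbit_antitone (x := y) (show g y ≤ y from h.le) (show (1:ℤ) ≤ -m by omega)
        rw [zpow_one_apply] at h3
        exact h3.trans_lt h
      exact absurd (h1.trans_lt h2) (not_lt.2 hyx)








lemma mem_orbital_apply_iff {g : Ω ≃o Ω} {x y : Ω} :
    g y ∈ orbital g x ↔ y ∈ orbital g x := by
  constructor
  · intro h
    have := mem_orbital_apply (f := g⁻¹) (x := x) (y := g y) (by rwa [orbital_inv])
    have e : (g⁻¹ : Ω ≃o Ω) (g y) = y := g.symm_apply_apply y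
    rwa [orbital_inv, e] at this
  · exact mem_orbital_apply

lemma above_all_of_not_mem {g : Ω ≃o Ω} {x z : Ω} (hz : z ∉ orbital g x)
    (hzx : x < z) : ∀ v ∈ orbital g x, v < z := by
  intro v hv
  rcases lt_or_ge v z with h | h
  · exact h
  · exact absurd (orbital_convex (mem_orbital_self g x) hv hzx.le h) hz

lemma below_all_of_not_mem {g : Ω ≃o Ω} {x z : Ω} (hz : z ∉ orbital g x)
    (hzx : z < x) : ∀ v ∈ orbital g x, z < v := by
  intro v hv
  rcases lt_or_ge z v with h | h
  · exact h
  · exact absurd (orbital_convex hv (mem_orbital_self g x) h hzx.le) hz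

/-- The bump of `g` on `orbital g x`. -/
lemma exists_bump (g : Ω ≃o Ω) (x : Ω) :
    ∃ e : Ω ≃o Ω, (∀ y ∈ orbital g x, e y = g y) ∧ (∀ y ∉ orbital g x, e y = y) := by
  set S := orbital g x with hS
  have memiff : ∀ y, g y ∈ S ↔ y ∈ S := fun y => mem_orbital_apply_iff
  have memiff' : ∀ y, g.symm y ∈ S ↔ y ∈ S := by
    intro y
    rw [← memiff (g.symm y), g.apply_symm_apply]
  have hup : ∀ (y z : Ω), y ∈ S → z ∉ S → y < z → ∀ v ∈ S, v < z := by
    intro y z hy hz hyz v hv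
    rcases lt_or_ge v z with h | h
    · exact h
    · exact absurd (orbital_convex hy hv hyz.le h) hz
  have hdown : ∀ (y z : Ω), y ∈ S → z ∉ S → z < y → ∀ v ∈ S, z < v := by
    intro y z hy hz hyz v hv
    rcases lt_or_ge z v with h | h
    · exact h
    · exact absurd (orbital_convex hv hy h hyz.le) hz
  let E : Ω ≃ Ω := {
    toFun := fun y => if y ∈ S then g y else y
    invFun := fun y => if y ∈ S then g.symm y else y
    left_inv := fun y => by
      by_cases h : y ∈ S
      · simp only [h, if_pos, (memiff y).2 h, g.symm_apply_apply]
      · simp only [h, if_neg, if_neg h, not_false_iff]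
    right_inv := fun y => by
      by_cases h : y ∈ S
      · simp only [h, if_pos, (memiff' y).2 h, g.apply_symm_apply]
      · simp only [h, if_neg, if_neg h, not_false_iff] }
  have Eval : ∀ y, E y = if y ∈ S then g y else y := fun y => rfl
  have hmono : StrictMono (⇑E) := by
    intro y z hyz
    rw [Eval, Eval]
    by_cases hy : y ∈ S <;> by_cases hz : z ∈ S
    · simp only [hy, hz, if_pos]; exact g.strictMono hyz
    · simp only [hy, hz, if_pos, if_neg, not_false_iff]
      exact hup y z hy hz hyz (g y) ((memiff y).2 hy)
    · simp only [hy, hz, if_pos, if_neg, not_false_iff]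
      exact hdown z y hz hy hyz (g z) ((memiff z).2 hz)
    · simp only [hy, hz, if_neg, not_false_iff]; exact hyz
  refine ⟨⟨E, fun {a b} => ?_⟩, fun y hy => ?_, fun y hy => ?_⟩
  · constructor
    · intro h
      by_contra hab
      exact absurd (hmono (lt_of_not_ge hab)) (not_lt.2 h)
    · intro h
      rcases eq_or_lt_of_le h with rfl | h
      · exact le_refl _
      · exact (hmono h).le
  · show E y = g y
    rw [Eval, if_pos hy]
  · show E y = y
    rw [Eval, if_neg hy]








lemma mul_apply_oi (f g : Ω ≃o Ω) (y : Ω) : (f * g) y = f (g y) := rfl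
lemma inv_apply_oi (f : Ω ≃o Ω) (y : Ω) : (f⁻¹) y = f.symm y := rfl

lemma mem_orbital_zpow (g : Ω ≃o Ω) (x : Ω) (j : ℤ) : (g^j) x ∈ orbital g x :=
  ⟨j, j, le_refl _, le_refl _⟩

lemma bump_symm_eq {g e : Ω ≃o Ω} {x : Ω}
    (h1 : ∀ y ∈ orbital g x, e y = g y) :
    ∀ y ∈ orbital g x, e.symm y = g.symm y := by
  intro y hy
  have hy' : g.symm y ∈ orbital g x := by
    rw [← mem_orbital_apply_iff (y := g.symm y), g.apply_symm_apply]; exact hy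
  have : e (g.symm y) = y := by rw [h1 _ hy', g.apply_symm_apply]
  calc e.symm y = e.symm (e (g.symm y)) := by rw [this]
  _ = g.symm y := e.symm_apply_apply _

lemma bump_zpow_eq {g e : Ω ≃o Ω} {x : Ω}
    (h1 : ∀ y ∈ orbital g x, e y = g y) :
    ∀ j : ℤ, (e^j) x = (g^j) x := by
  have h2 := bump_symm_eq h1 (x := x)
  intro j
  induction j using Int.induction_on with
  | zero => rw [zpow_zero_apply, zpow_zero_apply]
  | succ k ih =>
      rw [show (k:ℤ)+1 = 1+(k:ℤ) by ring, zpow_apply_mul, zpow_apply_mul,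
        zpow_one_apply, zpow_one_apply, ih, h1 _ (mem_orbital_zpow g x k)]
  | pred k ih =>
      rw [show -(k:ℤ)-1 = (-1) + (-(k:ℤ)) by ring, zpow_apply_mul, zpow_apply_mul, ih,
        zpow_neg_one, zpow_neg_one, inv_apply_oi, inv_apply_oi,
        h2 _ (mem_orbital_zpow g x (-(k:ℤ)))]

lemma bump_le {g e : Ω ≃o Ω} {x : Ω} (hx : x < g x)
    (h1 : ∀ y ∈ orbital g x, e y = g y) (h2 : ∀ y ∉ orbital g x, e y = y) :
    ∀ y, y ≤ e y := by
  intro y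
  by_cases hy : y ∈ orbital g x
  · rw [h1 y hy]; exact (orbital_same_direction hx hy).le
  · rw [h2 y hy]

lemma bump_inv_le {e : Ω ≃o Ω} (h : ∀ y, y ≤ e y) : ∀ y, e⁻¹ y ≤ y := by
  intro y
  have := h (e⁻¹ y)
  rwa [inv_apply_oi, e.apply_symm_apply] at this








lemma pos_neg_zpow_apply (f : Ω ≃o Ω) (m : ℤ) (y : Ω) : (f^m) ((f^(-m)) y) = y := by
  have := neg_zpow_apply f (-m) y
  rwa [neg_neg] at this

lemma core {g ψ : Ω ≃o Ω} {x : Ω}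
    (hgx : g x ≠ x)
    (hup : ∀ u ∈ orbital g x, u < ψ x)
    (hco : ∀ s ∈ orbital g x, ∃ c : ℤ, (ψ^c) x ≤ s) :
    ∀ F : Finset Ω, ∃ e : Ω ≃o Ω, (∀ a ∈ F, e a = a) ∧ ∃ y, e y ≠ y := by
  have hxψ : x < ψ x := hup x (mem_orbital_self g x)
  obtain ⟨Q, hQ1, hQ2⟩ := exists_bump g x
  have key : ∀ a : Ω, ∃ M : ℕ, ∀ m : ℕ, M ≤ m → (ψ^(m:ℤ)) a ∉ orbital g x := by
    intro a
    by_cases hj : ∃ j : ℤ, (ψ^j) x ≤ a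
    · obtain ⟨j, hja⟩ := hj
      refine ⟨(1 - j).toNat, fun m hm hmem => ?_⟩
      have hm' : (1:ℤ) ≤ (m:ℤ) + j := by
        have := Int.toNat_le.mp hm
        omega
      have h1 : ψ x ≤ (ψ^((m:ℤ)+j)) x := by
        have := orbit_monotone hxψ.le hm'
        rwa [zpow_one_apply] at this
      have h2 : (ψ^((m:ℤ)+j)) x ≤ (ψ^(m:ℤ)) a := by
        rw [zpow_apply_mul]
        exact (ψ^(m:ℤ)).monotone hja
      exact absurd (hup _ hmem) (not_lt.2 (h1.trans h2))
    · push_neg at hj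
      refine ⟨0, fun m _ hmem => ?_⟩
      obtain ⟨c, hc⟩ := hco _ hmem
      have : (ψ^(m:ℤ)) a < (ψ^c) x := by
        have := (ψ^(m:ℤ)).strictMono (hj (c - (m:ℤ)))
        rwa [← zpow_apply_mul, show (m:ℤ) + (c - m) = c by ring] at this
      exact absurd (hc.trans_lt this) (lt_irrefl _)
  intro F
  set N := F.sup (fun a => Classical.choose (key a)) with hN
  refine ⟨ψ^(-(N:ℤ)) * Q * ψ^(N:ℤ), fun a ha => ?_, ⟨(ψ^(-(N:ℤ))) x, ?_⟩⟩
  · have hMa : Classical.choose (key a) ≤ N := Finset.le_sup (f := fun a => Classical.choose (key a)) ha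
    have hnot : (ψ^(N:ℤ)) a ∉ orbital g x := Classical.choose_spec (key a) N hMa
    rw [mul_apply_oi, mul_apply_oi, hQ2 _ hnot, neg_zpow_apply]
  · rw [mul_apply_oi, mul_apply_oi, pos_neg_zpow_apply,
      hQ1 _ (mem_orbital_self g x)]
    intro hcon
    exact hgx ((ψ^(-(N:ℤ))).injective hcon)

lemma main_case {f g : Ω ≃o Ω} {x : Ω} (hgx : g x ≠ x)
    (hb : ∃ b : ℤ, ∀ u ∈ orbital g x, u < (f^b) x) :
    ∀ F : Finset Ω, ∃ e : Ω ≃o Ω, (∀ a ∈ F, e a = a) ∧ ∃ y, e y ≠ y := by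
  obtain ⟨b, hb⟩ := hb
  set φ := f^b with hφ
  have h0 : x < φ x := hb x (mem_orbital_self g x)
  obtain ⟨P, hP1, hP2⟩ := exists_bump φ x
  have hPle : ∀ y, y ≤ P y := bump_le h0 hP1 hP2
  -- orientation of g
  obtain ⟨g', hg'x, hg'orb⟩ : ∃ g' : Ω ≃o Ω, x < g' x ∧ orbital g' x = orbital g x := by
    rcases lt_trichotomy x (g x) with h | h | h
    · exact ⟨g, h, rfl⟩
    · exact absurd h.symm hgx
    · refine ⟨g⁻¹, ?_, orbital_inv g x⟩
      have := g.symm.strictMono h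
      rwa [g.symm_apply_apply] at this
  obtain ⟨Q, hQ1, hQ2⟩ := exists_bump g' x
  have hQle : ∀ y, y ≤ Q y := bump_le hg'x hQ1 hQ2
  set ψ := P * Q with hψ
  have hA : ∀ u ∈ orbital g x, u < ψ x := by
    intro u hu
    have h1 : P x < P (Q x) := P.strictMono (by
      have := hQ1 x (mem_orbital_self g' x); rw [this]; exact hg'x)
    rw [hP1 x (mem_orbital_self φ x)] at h1
    exact (hb u hu).trans h1
  have hC : ∀ s ∈ orbital g x, ∃ c : ℤ, (ψ^c) x ≤ s := by
    intro s hs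
    rw [← hg'orb] at hs
    obtain ⟨m, n, hm, hn⟩ := hs
    have hdesc : ∀ k : ℕ, (ψ^(-(k:ℤ))) x ≤ (g'^(-(k:ℤ))) x := by
      intro k
      induction k with
      | zero => simp only [Nat.cast_zero, neg_zero, zpow_zero_apply]; exact le_refl x
      | succ k ih =>
          have e1 : (ψ^(-((k:ℕ)+1:ℤ))) x = ψ⁻¹ ((ψ^(-(k:ℤ))) x) := by
            rw [show -((k:ℕ)+1:ℤ) = (-1) + (-(k:ℤ)) by ring, zpow_apply_mul, zpow_neg_one]
          have e2 : ψ⁻¹ ((ψ^(-(k:ℤ))) x) ≤ Q⁻¹ ((ψ^(-(k:ℤ))) x) := by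
            rw [show ψ⁻¹ = Q⁻¹ * P⁻¹ by rw [hψ, mul_inv_rev], mul_apply_oi]
            exact Q⁻¹.monotone (bump_inv_le hPle _)
          have e3 : Q⁻¹ ((ψ^(-(k:ℤ))) x) ≤ Q⁻¹ ((Q^(-(k:ℤ))) x) := by
            refine Q⁻¹.monotone ?_
            rw [bump_zpow_eq hQ1]
            exact ih
          have e4 : Q⁻¹ ((Q^(-(k:ℤ))) x) = (g'^(-((k:ℕ)+1:ℤ))) x := by
            rw [← zpow_neg_one, ← zpow_apply_mul, bump_zpow_eq hQ1,
              show (-1) + (-(k:ℤ)) = -((k:ℕ)+1:ℤ) by push_cast; ring]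
          rw [Nat.cast_add, Nat.cast_one] at *
          rw [e1]
          exact (e2.trans e3).trans_eq e4
    refine ⟨-(((-m).toNat : ℕ) : ℤ), ?_⟩
    have h5 : (g'^(-(((-m).toNat : ℕ) : ℤ))) x ≤ (g'^m) x := by
      refine orbit_monotone hg'x.le ?_
      omega
    exact ((hdesc _).trans h5).trans hm
  have hgx' : g' x ≠ x := ne_of_gt hg'x
  have := core hgx' (g := g') (ψ := ψ) (by rw [hg'orb]; exact hA) (by rw [hg'orb]; exact hC)
  exact this







def dualHom : (Ω ≃o Ω) →* (Ωᵒᵈ ≃o Ωᵒᵈ) where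
  toFun := OrderIso.dual
  map_one' := rfl
  map_mul' := fun _ _ => rfl

lemma dualHom_apply (f : Ω ≃o Ω) (y : Ω) : (dualHom f) (toDual y) = toDual (f y) := rfl

lemma dualHom_zpow (f : Ω ≃o Ω) (m : ℤ) (y : Ω) :
    ((dualHom f) ^ m) (toDual y) = toDual ((f^m) y) := by
  rw [← map_zpow]; rfl

lemma orbital_dual_mem (f : Ω ≃o Ω) (x : Ω) (y : Ωᵒᵈ) :
    y ∈ orbital (dualHom f) (toDual x) ↔ ofDual y ∈ orbital f x := by
  constructor
  · rintro ⟨m, n, hm, hn⟩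
    refine ⟨n, m, ?_, ?_⟩
    · have := hn
      rw [show y = toDual (ofDual y) from rfl, dualHom_zpow] at this
      exact this
    · have := hm
      rw [show y = toDual (ofDual y) from rfl, dualHom_zpow] at this
      exact this
  · rintro ⟨m, n, hm, hn⟩
    refine ⟨n, m, ?_, ?_⟩
    · show ofDual y ≤ ofDual (((dualHom f)^n) (toDual x))
      rw [dualHom_zpow]; exact hn
    · show ofDual (((dualHom f)^m) (toDual x)) ≤ ofDual y
      rw [dualHom_zpow]; exact hm

def undualIso (e : Ωᵒᵈ ≃o Ωᵒᵈ) : Ω ≃o Ω where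
  toFun := fun a => ofDual (e (toDual a))
  invFun := fun a => ofDual (e.symm (toDual a))
  left_inv := fun a => by simp
  right_inv := fun a => by simp
  map_rel_iff' := by
    intro a b
    exact e.map_rel_iff (a := toDual b) (b := toDual a)

lemma countable_dual_aut (h : Countable (Ω ≃o Ω)) : Countable (Ωᵒᵈ ≃o Ωᵒᵈ) := by
  have hinj : Function.Injective (undualIso (Ω := Ω)) := by
    intro e e' he
    ext y
    have := congrArg (fun (q : Ω ≃o Ω) => toDual (q (ofDual y))) he
    exact this
  exact hinj.countable


end Machinery



section
variable {Ω : Type} [LinearOrder Ω]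

def rigidFset (p : (Ω ≃o Ω) × Finset Ω) : Finset Ω := p.2 ∪ p.2.image p.1.symm

def rigidNext (E : Finset Ω → Ω ≃o Ω) (W : Finset Ω → Ω) (v : ℕ → Ω)
    (p : (Ω ≃o Ω) × Finset Ω) (b : Bool) (n : ℕ) : (Ω ≃o Ω) × Finset Ω :=
  (if b then p.1 * E (rigidFset p) else p.1,
    insert (v n) (insert (W (rigidFset p)) p.2))

def rigidBuild (E : Finset Ω → Ω ≃o Ω) (W : Finset Ω → Ω) (v : ℕ → Ω)
    (σ : ℕ → Bool) : ℕ → (Ω ≃o Ω) × Finset Ω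
  | 0 => (1, {v 0})
  | n+1 => rigidNext E W v (rigidBuild E W v σ n) (σ n) (n+1)

variable {E : Finset Ω → Ω ≃o Ω} {W : Finset Ω → Ω} {v : ℕ → Ω}

lemma rigid_mono (σ : ℕ → Bool) {m n : ℕ} (h : m ≤ n) :
    (rigidBuild E W v σ m).2 ⊆ (rigidBuild E W v σ n).2 := by
  induction n, h using Nat.le_induction with
  | base => exact subset_rfl
  | succ n hn ih =>
      refine ih.trans ?_
      show _ ⊆ (rigidNext E W v (rigidBuild E W v σ n) (σ n) (n+1)).2
      unfold rigidNext
      intro a ha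
      simp only [Finset.mem_insert]
      exact Or.inr (Or.inr ha)

lemma rigid_v_mem (σ : ℕ → Bool) (n : ℕ) : v n ∈ (rigidBuild E W v σ n).2 := by
  cases n with
  | zero => simp [rigidBuild]
  | succ n => simp [rigidBuild, rigidNext]

lemma rigid_agree (hEfix : ∀ F : Finset Ω, ∀ a ∈ F, E F a = a)
    (σ : ℕ → Bool) (n : ℕ) :
    ∀ y ∈ (rigidBuild E W v σ n).2,
      (rigidBuild E W v σ (n+1)).1 y = (rigidBuild E W v σ n).1 y ∧
      (rigidBuild E W v σ (n+1)).1.symm y = (rigidBuild E W v σ n).1.symm y := by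
  intro y hy
  set p := rigidBuild E W v σ n with hp
  have h1 : (rigidBuild E W v σ (n+1)).1 = if σ n then p.1 * E (rigidFset p) else p.1 := rfl
  have hyF : y ∈ rigidFset p := by
    unfold rigidFset; exact Finset.mem_union_left _ hy
  have hyF2 : p.1.symm y ∈ rigidFset p := by
    unfold rigidFset
    exact Finset.mem_union_right _ (Finset.mem_image_of_mem _ hy)
  cases hb : σ n with
  | false => rw [h1, hb]; exact ⟨rfl, rfl⟩
  | true =>
      rw [h1, hb]
      simp only [if_true]
      constructor
      · show (p.1 * E (rigidFset p)) y = p.1 y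
        rw [show (p.1 * E (rigidFset p)) y = p.1 (E (rigidFset p) y) from rfl,
          hEfix _ _ hyF]
      · show (p.1 * E (rigidFset p)).symm y = p.1.symm y
        have : (p.1 * E (rigidFset p)).symm y = (E (rigidFset p)).symm (p.1.symm y) := rfl
        rw [this]
        have he : E (rigidFset p) (p.1.symm y) = p.1.symm y := hEfix _ _ hyF2
        calc (E (rigidFset p)).symm (p.1.symm y)
            = (E (rigidFset p)).symm (E (rigidFset p) (p.1.symm y)) := by rw [he]
        _ = p.1.symm y := (E (rigidFset p)).symm_apply_apply _

lemma rigid_stable (hEfix : ∀ F : Finset Ω, ∀ a ∈ F, E F a = a)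
    (σ : ℕ → Bool) {n m : ℕ} (h : n ≤ m) :
    ∀ y ∈ (rigidBuild E W v σ n).2,
      (rigidBuild E W v σ m).1 y = (rigidBuild E W v σ n).1 y ∧
      (rigidBuild E W v σ m).1.symm y = (rigidBuild E W v σ n).1.symm y := by
  induction m, h using Nat.le_induction with
  | base => exact fun y _ => ⟨rfl, rfl⟩
  | succ m hm ih =>
      intro y hy
      have hy' : y ∈ (rigidBuild E W v σ m).2 := rigid_mono σ hm hy
      obtain ⟨e1, e2⟩ := rigid_agree hEfix σ m y hy'
      obtain ⟨e3, e4⟩ := ih y hy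
      exact ⟨e1.trans e3, e2.trans e4⟩

lemma rigid_prefix {σ τ : ℕ → Bool} (n : ℕ) (h : ∀ i < n, σ i = τ i) :
    rigidBuild E W v σ n = rigidBuild E W v τ n := by
  induction n with
  | zero => rfl
  | succ n ih =>
      have hs : rigidBuild E W v σ n = rigidBuild E W v τ n :=
        ih (fun i hi => h i (by omega))
      show rigidNext E W v _ (σ n) (n+1) = rigidNext E W v _ (τ n) (n+1)
      rw [hs, h n (by omega)]
end

section
variable {Ω : Type} [LinearOrder Ω]

lemma rigid_main [Countable Ω] (hAut : Countable (Ω ≃o Ω))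
    (H : ∀ F : Finset Ω, ∃ e : Ω ≃o Ω, (∀ a ∈ F, e a = a) ∧ ∃ y, e y ≠ y) : False := by
  obtain ⟨e0, -, y0, -⟩ := H ∅
  have : Nonempty Ω := ⟨y0⟩
  obtain ⟨v, hv⟩ := exists_surjective_nat Ω
  set E : Finset Ω → Ω ≃o Ω := fun F => (H F).choose with hE
  have hEfix : ∀ F : Finset Ω, ∀ a ∈ F, E F a = a := fun F => (H F).choose_spec.1
  set W : Finset Ω → Ω := fun F => (H F).choose_spec.2.choose with hWdef
  have hW : ∀ F, E F (W F) ≠ W F := fun F => (H F).choose_spec.2.choose_spec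
  set idx : Ω → ℕ := fun y => (hv y).choose with hidxdef
  have hidx : ∀ y, v (idx y) = y := fun y => (hv y).choose_spec
  have hymem : ∀ (σ : ℕ → Bool) (y : Ω), y ∈ (rigidBuild E W v σ (idx y)).2 := by
    intro σ y
    have := rigid_v_mem (E := E) (W := W) (v := v) σ (idx y)
    rwa [hidx y] at this
  set gfun : (ℕ → Bool) → Ω → Ω := fun σ y => (rigidBuild E W v σ (idx y)).1 y with hgfun
  have hgf : ∀ (σ : ℕ → Bool) (y : Ω) (m : ℕ), idx y ≤ m →
      (rigidBuild E W v σ m).1 y = gfun σ y := by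
    intro σ y m hm
    exact (rigid_stable hEfix σ hm y (hymem σ y)).1
  have hmono : ∀ σ, StrictMono (gfun σ) := by
    intro σ y z hyz
    rw [← hgf σ y (max (idx y) (idx z)) (le_max_left _ _),
      ← hgf σ z (max (idx y) (idx z)) (le_max_right _ _)]
    exact (rigidBuild E W v σ _).1.strictMono hyz
  have hsurj : ∀ σ, Function.Surjective (gfun σ) := by
    intro σ z
    set y := (rigidBuild E W v σ (idx z)).1.symm z with hy
    refine ⟨y, ?_⟩
    set m := max (idx y) (idx z) with hm
    have h1 : gfun σ y = (rigidBuild E W v σ m).1 y :=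
      (hgf σ y m (le_max_left _ _)).symm
    have h2 : (rigidBuild E W v σ m).1.symm z = y :=
      (rigid_stable hEfix σ (le_max_right _ _) z (hymem σ z)).2
    rw [h1, ← h2, OrderIso.apply_symm_apply]
  set G : (ℕ → Bool) → Ω ≃o Ω :=
    fun σ => StrictMono.orderIsoOfSurjective (gfun σ) (hmono σ) (hsurj σ) with hGdef
  have hGval : ∀ σ y, G σ y = gfun σ y := fun σ y => rfl
  have hGinj : Function.Injective G := by
    intro σ τ hστ
    by_contra hne
    have hex : ∃ i, σ i ≠ τ i := Function.ne_iff.mp hne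
    set n := Nat.find hex with hn
    have hdiff : σ n ≠ τ n := Nat.find_spec hex
    have hlt : ∀ i < n, σ i = τ i := fun i hi => not_not.mp (Nat.find_min hex hi)
    have hpre : rigidBuild E W v σ n = rigidBuild E W v τ n := rigid_prefix n hlt
    set p := rigidBuild E W v σ n with hp
    set w := W (rigidFset p) with hw
    have hwmemσ : w ∈ (rigidBuild E W v σ (n+1)).2 := by
      show w ∈ (rigidNext E W v (rigidBuild E W v σ n) (σ n) (n+1)).2
      unfold rigidNext
      simp
      exact Or.inr (Or.inl rfl)
    have hwmemτ : w ∈ (rigidBuild E W v τ (n+1)).2 := by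
      show w ∈ (rigidNext E W v (rigidBuild E W v τ n) (τ n) (n+1)).2
      unfold rigidNext
      rw [← hpre]
      simp
      exact Or.inr (Or.inl rfl)
    have hvalσ : gfun σ w = (rigidBuild E W v σ (n+1)).1 w := by
      rw [← hgf σ w (max (idx w) (n+1)) (le_max_left _ _)]
      exact (rigid_stable hEfix σ (le_max_right _ _) w hwmemσ).1
    have hvalτ : gfun τ w = (rigidBuild E W v τ (n+1)).1 w := by
      rw [← hgf τ w (max (idx w) (n+1)) (le_max_left _ _)]
      exact (rigid_stable hEfix τ (le_max_right _ _) w hwmemτ).1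
    have hstepσ : (rigidBuild E W v σ (n+1)).1
        = if σ n then p.1 * E (rigidFset p) else p.1 := rfl
    have hstepτ : (rigidBuild E W v τ (n+1)).1
        = if τ n then p.1 * E (rigidFset p) else p.1 := by
      show (rigidNext E W v (rigidBuild E W v τ n) (τ n) (n+1)).1 = _
      rw [← hpre]
      rfl
    have hne2 : gfun σ w ≠ gfun τ w := by
      rw [hvalσ, hvalτ, hstepσ, hstepτ]
      have hmoved : p.1 (E (rigidFset p) w) ≠ p.1 w :=
        fun hcon => hW _ (p.1.injective hcon)
      cases hσn : σ n <;> cases hτn : τ n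
      · rw [hσn, hτn] at hdiff; exact absurd rfl hdiff
      · simp only [if_true, if_false]; exact hmoved.symm
      · simp only [if_true, if_false]; exact hmoved
      · rw [hσn, hτn] at hdiff; exact absurd rfl hdiff
    exact hne2 (by rw [← hGval σ w, ← hGval τ w, hστ])
  have hcnt : Countable (ℕ → Bool) := hGinj.countable
  obtain ⟨Fsur, hFsur⟩ := exists_surjective_nat (ℕ → Bool)
  obtain ⟨k, hk⟩ := hFsur (fun n => !(Fsur n n))
  have := congrFun hk k
  simp at this
end


section Assembly
variable {Ω : Type} [LinearOrder Ω]

lemma orbital_sub [Countable Ω] (hAut : Countable (Ω ≃o Ω)) (f g : Ω ≃o Ω) (x : Ω)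
    (hg : (orbital g x).Infinite) : orbital f x ⊆ orbital g x := by
  by_contra hsub
  obtain ⟨z, hzf, hzg⟩ := Set.not_subset.mp hsub
  have hgx : g x ≠ x := moves_of_infinite hg
  rcases lt_trichotomy x z with hxz | rfl | hzx
  · obtain ⟨m, n, hm, hn⟩ := hzf
    have hb : ∀ u ∈ orbital g x, u < (f^n) x :=
      fun u hu => (above_all_of_not_mem hzg hxz u hu).trans_le hn
    exact rigid_main hAut (main_case hgx ⟨n, hb⟩)
  · exact hzg (mem_orbital_self g x)
  · obtain ⟨m, n, hm, hn⟩ := hzf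
    have hCd : Countable Ωᵒᵈ := ‹Countable Ω›
    have hgx' : (dualHom g) (toDual x) ≠ toDual x := by
      intro hcon
      exact hgx (congrArg ofDual hcon)
    have hb' : ∃ b : ℤ, ∀ u ∈ orbital (dualHom g) (toDual x),
        u < ((dualHom f)^b) (toDual x) := by
      refine ⟨m, fun u hu => ?_⟩
      rw [orbital_dual_mem] at hu
      have h2 : z < ofDual u := below_all_of_not_mem hzg hzx _ hu
      show ofDual (((dualHom f)^m) (toDual x)) < ofDual u
      rw [dualHom_zpow]
      exact hm.trans_lt h2
    have H' := main_case hgx' hb'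
    have H : ∀ F : Finset Ω, ∃ e : Ω ≃o Ω, (∀ a ∈ F, e a = a) ∧ ∃ y, e y ≠ y := by
      intro F
      obtain ⟨e, hfix, y, hy⟩ := H' (F.image toDual)
      refine ⟨undualIso e, fun a ha => ?_, ⟨ofDual y, ?_⟩⟩
      · have h3 := hfix (toDual a) (Finset.mem_image_of_mem _ ha)
        show ofDual (e (toDual a)) = a
        rw [h3]
        rfl
      · intro hcon
        exact hy (congrArg toDual hcon)
    exact rigid_main hAut H
end Assembly

/-- if Ω is a countable linear order with countable automorphism
group and `f`, `g` are automorphisms whose orbitals at `x` are both infinite,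
then those orbitals coincide. -/
theorem stmt_17 (Ω : Type) [LinearOrder Ω] [Countable Ω]
    (hAut : Countable (Ω ≃o Ω)) (f g : Ω ≃o Ω) (x : Ω)
    (hf : (orbital f x).Infinite) (hg : (orbital g x).Infinite) :
    orbital f x = orbital g x :=
  Set.Subset.antisymm (orbital_sub hAut f g x hg) (orbital_sub hAut g f x hf)
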